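/- Let A = R[X_1,…,X_r]/⟨X_1^{n_1}−1,…,X_r^{n_r}−1⟩ over a finite commutative chain ring R, let Φ : A^l → R^{nl} be the coordinate map (listing coefficients of each component in a fixed monomial order, n = n_1⋯n_r), and let C ⊆ A^l be an A-submodule. Then Φ(C)^{⊥_E} = Φ(C^{⊥_H}), where ⊥_E is the dual with respect to the Euclidean inner product on R^{nl} and ⊥_H is the dual of C with respect to the Hermitian product ⟨f, g⟩ = Σ_j f_j·ḡ_j, with ḡ the conjugate of g obtained by replacing each X_j by X_j^{−1}. -/

import Mathlib

set_option maxHeartbeats 1000000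
set_option synthInstance.maxHeartbeats 200000

/-- Let `A = R[X_1,…,X_r]/⟨X_1^{n_1}−1,…,X_r^{n_r}−1⟩`, `b` the monomial basis of `A`
over `R`, `σ` the conjugation automorphism (`X_j ↦ X_j^{-1}`), and `Φ` the coordinate
map `A^l → R^{nl}` sending `e` to the coefficient vectors of its components. For an
`A`-submodule `C ⊆ A^l`, the Euclidean dual of `Φ(C)` equals `Φ(C^{⊥_H})`, where
`⊥_H` is the dual with respect to the Hermitian product `⟨f,g⟩ = Σ_k f_k·σ(g_k)`. -/
theorem stmt12 {R : Type*} [CommRing R] [Fintype R] (r l : ℕ) (n : Fin r → ℕ)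
    (hn : ∀ j, 0 < n j)
    (I : Ideal (MvPolynomial (Fin r) R))
    (hI : I = Ideal.span (Set.range fun j : Fin r =>
      (MvPolynomial.X j : MvPolynomial (Fin r) R) ^ (n j) - 1))
    (b : Module.Basis ((j : Fin r) → Fin (n j)) R (MvPolynomial (Fin r) R ⧸ I))
    (hb : ∀ i : (j : Fin r) → Fin (n j),
      b i = Ideal.Quotient.mk I (∏ j, MvPolynomial.X j ^ ((i j : ℕ))))
    (σ : (MvPolynomial (Fin r) R ⧸ I) ≃ₐ[R] (MvPolynomial (Fin r) R ⧸ I))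
    (hσ : ∀ i : (j : Fin r) → Fin (n j),
      σ (b i) = Ideal.Quotient.mk I (∏ j, MvPolynomial.X j ^ ((n j - (i j : ℕ)) % n j)))
    (C : Submodule (MvPolynomial (Fin r) R ⧸ I) (Fin l → (MvPolynomial (Fin r) R ⧸ I))) :
    {v : Fin l → ((j : Fin r) → Fin (n j)) → R |
        ∀ c ∈ C, ∑ k : Fin l, ∑ i : (j : Fin r) → Fin (n j), v k i * b.repr (c k) i = 0}
      = (fun e : Fin l → (MvPolynomial (Fin r) R ⧸ I) =>
          fun k i => b.repr (e k) i) ''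
        {e : Fin l → (MvPolynomial (Fin r) R ⧸ I) | ∀ c ∈ C, ∑ k : Fin l, e k * σ (c k) = 0} := by
  haveI : ∀ j, NeZero (n j) := fun j => ⟨(hn j).ne'⟩
  let G := (j : Fin r) → Fin (n j)
  let A := MvPolynomial (Fin r) R ⧸ I
  -- mk (X j ^ n j) = 1
  have hmk1 : ∀ j : Fin r,
      Ideal.Quotient.mk I (MvPolynomial.X j ^ n j) = 1 := by
    intro j
    have hmem : (MvPolynomial.X j ^ n j - 1 : MvPolynomial (Fin r) R) ∈ I := by
      rw [hI]; exact Ideal.subset_span ⟨j, rfl⟩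
    have h0 := (Ideal.Quotient.eq_zero_iff_mem).2 hmem
    rw [map_sub, sub_eq_zero] at h0
    simpa using h0
  have hXpow : ∀ (j : Fin r) (m : ℕ),
      Ideal.Quotient.mk I (MvPolynomial.X j ^ m)
        = Ideal.Quotient.mk I (MvPolynomial.X j ^ (m % n j)) := by
    intro j m
    conv_lhs => rw [← Nat.div_add_mod m (n j)]
    rw [pow_add, pow_mul, map_mul, map_pow, hmk1, one_pow, one_mul]
  have hbadd : ∀ p q : G, b p * b q = b (p + q) := by
    intro p q
    rw [hb, hb, hb, ← map_mul, ← Finset.prod_mul_distrib, map_prod, map_prod]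
    refine Finset.prod_congr rfl fun j _ => ?_
    rw [← pow_add, hXpow]
    have : ((p + q) j : ℕ) = ((p j : ℕ) + (q j : ℕ)) % n j := rfl
    rw [this]
  have hbneg : ∀ p : G, σ (b p) = b (-p) := by
    intro p
    rw [hσ, hb]
    refine congrArg _ (Finset.prod_congr rfl fun j _ => ?_)
    have : ((-p) j : ℕ) = (n j - (p j : ℕ)) % n j := rfl
    rw [this]
  -- shift lemma
  have hshift : ∀ (a : G) (x : A) (q : G), b.repr (b a * x) q = b.repr x (-a + q) := by
    intro a x q
    conv_lhs => rw [← b.sum_repr x]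
    rw [Finset.mul_sum]
    simp only [mul_smul_comm, hbadd, map_sum, map_smul, Module.Basis.repr_self,
      Finsupp.smul_apply, Finsupp.single_apply, smul_eq_mul,
      Finsupp.coe_finset_sum, Finset.sum_apply, mul_ite, mul_one, mul_zero]
    have hcond : ∀ p : G, (a + p = q) ↔ (p = -a + q) := by
      intro p
      constructor
      · intro h; rw [← h]; abel
      · intro h; rw [h]; abel
    simp only [hcond]
    rw [Finset.sum_ite_eq' Finset.univ (-a + q)]
    simp
  -- key lemma
  have key : ∀ (x y : A) (a : G),
      b.repr (x * σ y) a = ∑ q : G, b.repr x (a + q) * b.repr y q := by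
    intro x y a
    conv_lhs => rw [← b.sum_repr x, ← b.sum_repr y]
    rw [map_sum, Finset.sum_mul]
    simp only [map_smul, hbneg, Finset.mul_sum, smul_mul_smul_comm, hbadd,
      map_sum, Module.Basis.repr_self, Finsupp.smul_apply, Finsupp.single_apply,
      smul_eq_mul, Finsupp.coe_finset_sum, Finset.sum_apply, mul_ite, mul_one, mul_zero]
    rw [Finset.sum_comm]
    refine Finset.sum_congr rfl fun q _ => ?_
    have hcond : ∀ p : G, (p + -q = a) ↔ (p = a + q) := by
      intro p
      constructor
      · intro h; rw [← h]; abel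
      · intro h; rw [h]; abel
    simp only [hcond]
    rw [Finset.sum_ite_eq' Finset.univ (a + q)]
    simp
  ext v
  simp only [Set.mem_setOf_eq, Set.mem_image]
  constructor
  · intro hv
    refine ⟨fun k => b.equivFun.symm (v k), fun c hc => ?_, ?_⟩
    · -- Hermitian orthogonality
      have hrepr : ∀ (k : Fin l) (q : G), b.repr (b.equivFun.symm (v k)) q = v k q := by
        intro k q
        rw [← Module.Basis.equivFun_apply, LinearEquiv.apply_symm_apply]
      have hz : ∀ a : G,
          b.repr (∑ k : Fin l, b.equivFun.symm (v k) * σ (c k)) a = 0 := by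
        intro a
        simp only [map_sum, Finsupp.coe_finset_sum, Finset.sum_apply]
        have hc' : (b a • c) ∈ C := C.smul_mem _ hc
        have hv' := hv (b a • c) hc'
        rw [← hv']
        refine Finset.sum_congr rfl fun k _ => ?_
        rw [key]
        refine (Fintype.sum_equiv (Equiv.addLeft a).symm
          (fun q => v k q * b.repr ((b a • c) k) q)
          (fun q => b.repr (b.equivFun.symm (v k)) (a + q) * b.repr (c k) q) fun q => ?_).symm
        have e1 : ((Equiv.addLeft a).symm q) = -a + q := by
          simp [Equiv.addLeft_symm]
        have h1 : (b a • c) k = b a * c k := by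
          simp [smul_eq_mul]
        rw [e1, h1]
        show v k q * (b.repr (b a * c k)) q
          = (b.repr (b.equivFun.symm (v k))) (a + (-a + q)) * (b.repr (c k)) (-a + q)
        rw [hshift, hrepr, add_neg_cancel_left]
      have : b.repr (∑ k : Fin l, b.equivFun.symm (v k) * σ (c k)) = 0 := by
        ext a; simpa using hz a
      exact (LinearEquiv.map_eq_zero_iff b.repr).1 this
    · funext k i
      rw [← Module.Basis.equivFun_apply, LinearEquiv.apply_symm_apply]
  · rintro ⟨e, he, rfl⟩
    intro c hc
    have h0 := congrArg (fun x : A => b.repr x 0) (he c hc)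
    simp only [map_sum, Finsupp.coe_finset_sum, Finset.sum_apply, map_zero,
      Finsupp.coe_zero, Pi.zero_apply] at h0
    rw [← h0]
    refine Finset.sum_congr rfl fun k _ => ?_
    rw [key]
    refine Finset.sum_congr rfl fun q _ => ?_
    rw [zero_add]
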